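/- arXiv:2208.07488 — 5 statements merged into one kernel-verified Lean document; each statement's English description precedes it below -/
import Mathlib

section
/- Let F : ℝⁿ ⇉ ℝⁿ be a multifunction that is locally bounded and locally Lipschitz with respect to the Hausdorff distance: on the closed ball of radius 2r* around x, all velocities have norm at most M and F(y) ⊆ F(z) + K‖y−z‖·B̄₁(0) for y,z in that ball. Suppose the minimal Hamiltonian h_F(x,ξ) := inf_{v ∈ F(x)} ⟨v,ξ⟩ is strictly positive for some ξ ≠ 0, and set x* := x + (r*/‖ξ‖)ξ. Then there exists R ∈ (0, r*) such that for all y in the closed ball B̄_R(x), h_F(y, x* − y) > (1/2)·h_F(x, x* − x). In fact any R < h_F(x, x*−x)/(2(M + 3r*K)) works. -/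
open Metric Set

/-- Local persistence of a strictly positive minimal Hamiltonian. -/
theorem posHam_nbhd {n : ℕ}
    (F : EuclideanSpace ℝ (Fin n) → Set (EuclideanSpace ℝ (Fin n)))
    (hne : ∀ y, (F y).Nonempty)
    (hF : EuclideanSpace ℝ (Fin n) → EuclideanSpace ℝ (Fin n) → ℝ)
    (hFdef : ∀ y η, hF y η = sInf ((fun v => (inner ℝ v η : ℝ)) '' F y))
    (x ξ : EuclideanSpace ℝ (Fin n)) (hξ : ξ ≠ 0)
    (rstar : ℝ) (hrstar : 0 < rstar)
    (M : ℝ) (hM : ∀ y ∈ closedBall x (2 * rstar), ∀ v ∈ F y, ‖v‖ ≤ M)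
    (K : ℝ) (hK : 0 < K)
    (hLip : ∀ y ∈ closedBall x (2 * rstar), ∀ z ∈ closedBall x (2 * rstar),
      ∀ v ∈ F y, ∃ w ∈ F z, ‖v - w‖ ≤ K * ‖y - z‖)
    (hpos : 0 < hF x ξ)
    (xstar : EuclideanSpace ℝ (Fin n)) (hxstar : xstar = x + (rstar / ‖ξ‖) • ξ) :
    (∃ R ∈ Ioo (0:ℝ) rstar, ∀ y ∈ closedBall x R,
        (1/2) * hF x (xstar - x) < hF y (xstar - y)) ∧
    (∀ R : ℝ, 0 < R → R < hF x (xstar - x) / (2 * (M + 3 * rstar * K)) →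
      R < rstar ∧ ∀ y ∈ closedBall x R,
        (1/2) * hF x (xstar - x) < hF y (xstar - y)) := by
  have hx2 : x ∈ closedBall x (2 * rstar) := mem_closedBall_self (by positivity)
  have hMnn : 0 ≤ M := by
    obtain ⟨v, hv⟩ := hne x
    exact le_trans (norm_nonneg v) (hM x hx2 v hv)
  set D : ℝ := M + 3 * rstar * K with hD
  have hDpos : 0 < D := by
    have : 0 < 3 * rstar * K := by positivity
    linarith
  have hbdd : ∀ y ∈ closedBall x (2 * rstar), ∀ η : EuclideanSpace ℝ (Fin n),
      BddBelow ((fun v => (inner ℝ v η : ℝ)) '' F y) := by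
    intro y hy η
    refine ⟨-(M * ‖η‖), ?_⟩
    rintro _ ⟨v, hv, rfl⟩
    have h1 : |(inner ℝ v η : ℝ)| ≤ ‖v‖ * ‖η‖ := abs_real_inner_le_norm v η
    have h2 : ‖v‖ * ‖η‖ ≤ M * ‖η‖ :=
      mul_le_mul_of_nonneg_right (hM y hy v hv) (norm_nonneg η)
    have h3 := neg_abs_le (inner ℝ v η : ℝ)
    simp only
    linarith
  have hξ' : ‖ξ‖ ≠ 0 := norm_ne_zero_iff.mpr hξ
  have hnorm : ‖xstar - x‖ = rstar := by
    rw [hxstar, add_sub_cancel_left, norm_smul, Real.norm_eq_abs,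
      abs_of_nonneg (by positivity), div_mul_cancel₀ _ hξ']
  set c : ℝ := rstar / ‖ξ‖ with hc
  have hcpos : 0 < c := div_pos hrstar (norm_pos_iff.mpr hξ)
  have h0pos : 0 < hF x (xstar - x) := by
    rw [hFdef]
    refine lt_of_lt_of_le (mul_pos hcpos hpos) (le_csInf ((hne x).image _) ?_)
    rintro _ ⟨v, hv, rfl⟩
    have hiv : (inner ℝ v (xstar - x) : ℝ) = c * inner ℝ v ξ := by
      rw [hxstar, add_sub_cancel_left, real_inner_smul_right]
    simp only [hiv]
    refine mul_le_mul_of_nonneg_left ?_ hcpos.le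
    rw [hFdef]
    exact csInf_le (hbdd x hx2 ξ) ⟨v, hv, rfl⟩
  have h0le : hF x (xstar - x) ≤ M * rstar := by
    obtain ⟨v, hv⟩ := hne x
    rw [hFdef]
    refine le_trans (csInf_le (hbdd x hx2 _) ⟨v, hv, rfl⟩) ?_
    calc (inner ℝ v (xstar - x) : ℝ) ≤ ‖v‖ * ‖xstar - x‖ := real_inner_le_norm v _
      _ ≤ M * rstar := by
          rw [hnorm]
          exact mul_le_mul_of_nonneg_right (hM x hx2 v hv) hrstar.le
  have key : ∀ R : ℝ, 0 < R → R < hF x (xstar - x) / (2 * D) →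
      R < rstar ∧ ∀ y ∈ closedBall x R,
        (1/2) * hF x (xstar - x) < hF y (xstar - y) := by
    intro R hR hRlt
    have hRr : R < rstar := by
      have hle : hF x (xstar - x) / (2 * D) ≤ rstar / 2 := by
        rw [div_le_div_iff₀ (by linarith) (by norm_num)]
        nlinarith [mul_nonneg hrstar.le hK.le]
      linarith
    refine ⟨hRr, ?_⟩
    intro y hy
    have hdy : ‖y - x‖ ≤ R := by
      rw [← dist_eq_norm]; exact mem_closedBall.mp hy
    have hy2 : y ∈ closedBall x (2 * rstar) :=
      mem_closedBall.mpr (le_trans (mem_closedBall.mp hy) (by linarith))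
    have hxy : ‖xstar - y‖ ≤ 2 * rstar := by
      have heq : xstar - y = (xstar - x) + (x - y) := by abel
      rw [heq]
      have h1 : ‖(xstar - x) + (x - y)‖ ≤ ‖xstar - x‖ + ‖x - y‖ := norm_add_le _ _
      have h2 : ‖x - y‖ ≤ R := by rw [norm_sub_rev]; exact hdy
      rw [hnorm] at h1
      linarith
    have hbound : ∀ v ∈ F y,
        hF x (xstar - x) - R * D ≤ (inner ℝ v (xstar - y) : ℝ) := by
      intro v hv
      obtain ⟨w, hw, hvw⟩ := hLip y hy2 x hx2 v hv
      have hvwR : ‖v - w‖ ≤ K * R :=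
        le_trans hvw (mul_le_mul_of_nonneg_left hdy hK.le)
      have hsplit : (inner ℝ v (xstar - y) : ℝ)
          = inner ℝ w (xstar - x) + inner ℝ (v - w) (xstar - y) + inner ℝ w (x - y) := by
        simp only [inner_sub_left, inner_sub_right]
        ring
      have h1 : hF x (xstar - x) ≤ (inner ℝ w (xstar - x) : ℝ) := by
        rw [hFdef]; exact csInf_le (hbdd x hx2 _) ⟨w, hw, rfl⟩
      have h2 : -(K * R * (2 * rstar)) ≤ (inner ℝ (v - w) (xstar - y) : ℝ) := by
        have ha := abs_real_inner_le_norm (v - w) (xstar - y)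
        have hb := neg_abs_le (inner ℝ (v - w) (xstar - y) : ℝ)
        nlinarith [norm_nonneg (v - w), norm_nonneg (xstar - y)]
      have h3 : -(M * R) ≤ (inner ℝ w (x - y) : ℝ) := by
        have ha := abs_real_inner_le_norm w (x - y)
        have hb := neg_abs_le (inner ℝ w (x - y) : ℝ)
        have hwM : ‖w‖ ≤ M := hM x hx2 w hw
        have hxyR : ‖x - y‖ ≤ R := by rw [norm_sub_rev]; exact hdy
        nlinarith [norm_nonneg w, norm_nonneg (x - y)]
      rw [hsplit]
      have hnn : 0 ≤ R * (rstar * K) :=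
        mul_nonneg hR.le (mul_nonneg hrstar.le hK.le)
      rw [hD]
      nlinarith
    have h2RD : R * (2 * D) < hF x (xstar - x) :=
      (lt_div_iff₀ (by positivity)).mp hRlt
    rw [hFdef y]
    refine lt_of_lt_of_le (b := hF x (xstar - x) - R * D) ?_ (le_csInf ((hne y).image _) ?_)
    · nlinarith
    · rintro _ ⟨v, hv, rfl⟩
      exact hbound v hv
  refine ⟨?_, key⟩
  obtain ⟨hRr, hball⟩ := key (hF x (xstar - x) / (4 * D)) (by positivity)
    (div_lt_div_of_pos_left h0pos (by positivity) (by linarith))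
  exact ⟨_, ⟨by positivity, hRr⟩, hball⟩
end

section
/- Let d_c be an extended quasi-metric on a space X, O ⊆ X nonempty, clr(x) := inf_{y∈O} d_c(x,y). Let π : [0,T] → X be a path and c : [0,T] × [0,T] → [0,∞) a cost functional satisfying d_c(π(s), π(t)) ≤ c(s,t) for s ≤ t, c additive (c(s,u) = c(s,t) + c(t,u) for s ≤ t ≤ u), and c(s,t) → 0 as t − s → 0 (continuity of the cost integral). If clr(π(τ)) < ∞ for some τ ∈ (0,T), then the one-sided limits lim_{t→τ⁻} clr(π(t)) and lim_{t→τ⁺} clr(π(t)) exist in [0,∞], and lim_{t→τ⁻} clr(π(t)) ≤ clr(π(τ)) ≤ lim_{t→τ⁺} clr(π(t)). -/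
open ENNReal Filter Set Topology

/-- One-sided limits of clearance along an admissible trajectory. -/
theorem clearance_one_sided_limits {X : Type*} (d : X → X → ℝ≥0∞)
    (hzero : ∀ x y, d x y = 0 ↔ x = y)
    (htri : ∀ x y z, d x y ≤ d x z + d z y)
    (O : Set X) (hO : O.Nonempty)
    (clr : X → ℝ≥0∞) (hclr : ∀ x, clr x = ⨅ y ∈ O, d x y)
    (T : ℝ) (hT : 0 < T) (π : ℝ → X)
    (c : ℝ → ℝ → ℝ) (hc_nonneg : ∀ s t, 0 ≤ c s t)
    (hc_dom : ∀ s t, 0 ≤ s → s ≤ t → t ≤ T → d (π s) (π t) ≤ ENNReal.ofReal (c s t))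
    (hc_add : ∀ s t u, 0 ≤ s → s ≤ t → t ≤ u → u ≤ T → c s u = c s t + c t u)
    (hc_cont : ∀ ε > (0:ℝ), ∃ δ > (0:ℝ), ∀ s t, 0 ≤ s → s ≤ t → t ≤ T →
      t - s < δ → c s t < ε)
    (τ : ℝ) (hτ : τ ∈ Ioo 0 T) (hfin : clr (π τ) < ⊤) :
    ∃ L₁ L₂ : ℝ≥0∞,
      Tendsto (fun t => clr (π t)) (𝓝[Ioo 0 τ] τ) (𝓝 L₁) ∧
      Tendsto (fun t => clr (π t)) (𝓝[Ioo τ T] τ) (𝓝 L₂) ∧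
      L₁ ≤ clr (π τ) ∧ clr (π τ) ≤ L₂ := by
  obtain ⟨hτ0, hτT⟩ := hτ
  -- triangle inequality for clearance
  have key : ∀ x y : X, clr x ≤ d x y + clr y := by
    intro x y
    rw [hclr, hclr, show (⨅ z ∈ O, d y z) = ⨅ z : O, d y z from iInf_subtype',
      ENNReal.add_iInf, show (⨅ z ∈ O, d x z) = ⨅ z : O, d x z from iInf_subtype']
    exact iInf_mono fun z => htri x z.1 y
  set h : ℝ → ℝ≥0∞ := fun t => clr (π t) + ENNReal.ofReal (c 0 t) with hh
  have hmono : ∀ s t, 0 ≤ s → s ≤ t → t ≤ T → h s ≤ h t := by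
    intro s t hs hst htT
    have h1 : clr (π s) ≤ ENNReal.ofReal (c s t) + clr (π t) :=
      le_trans (key _ (π t)) (add_le_add_left (hc_dom s t hs hst htT) _)
    calc h s = clr (π s) + ENNReal.ofReal (c 0 s) := rfl
      _ ≤ ENNReal.ofReal (c s t) + clr (π t) + ENNReal.ofReal (c 0 s) :=
          add_le_add_left h1 _
      _ = clr (π t) + (ENNReal.ofReal (c 0 s) + ENNReal.ofReal (c s t)) := by ring
      _ = h t := by
          rw [← ENNReal.ofReal_add (hc_nonneg 0 s) (hc_nonneg s t),
            ← hc_add 0 s t le_rfl hs hst htT]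
  -- clamped versions
  set g₁ : ℝ → ℝ≥0∞ := fun t => h (max 0 (min t τ)) with hg₁
  set g₂ : ℝ → ℝ≥0∞ := fun t => h (max τ (min t T)) with hg₂
  have hg₁mono : Monotone g₁ := by
    intro s t hst
    exact hmono _ _ (le_max_left _ _)
      (max_le_max le_rfl (min_le_min hst le_rfl))
      (max_le hT.le (le_trans (min_le_right _ _) hτT.le))
  have hg₂mono : Monotone g₂ := by
    intro s t hst
    exact hmono _ _ (le_trans hτ0.le (le_max_left _ _))
      (max_le_max le_rfl (min_le_min hst le_rfl))
      (max_le hτT.le (min_le_right _ _))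
  have hg₁τ : g₁ τ = h τ := by simp [hg₁, min_self, max_eq_right hτ0.le]
  have hg₂τ : g₂ τ = h τ := by simp [hg₂, min_eq_left hτT.le, max_self]
  -- continuity of the accumulated cost
  have hCt : ∀ (s : Set ℝ), s ⊆ Icc 0 T →
      Tendsto (fun t => ENNReal.ofReal (c 0 t)) (𝓝[s] τ) (𝓝 (ENNReal.ofReal (c 0 τ))) := by
    intro s hs
    refine (ENNReal.continuous_ofReal.tendsto _).comp ?_
    rw [Metric.tendsto_nhdsWithin_nhds]
    intro ε hε
    obtain ⟨δ, hδ, hδ'⟩ := hc_cont ε hε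
    refine ⟨δ, hδ, fun t ht hd => ?_⟩
    obtain ⟨ht0, htT⟩ := hs ht
    rw [Real.dist_eq] at hd ⊢
    rcases le_total t τ with hle | hle
    · have := hc_add 0 t τ le_rfl ht0 hle hτT.le
      have h2 := hc_nonneg t τ
      have h3 := hδ' t τ ht0 hle hτT.le (by rw [abs_sub_lt_iff] at hd; linarith)
      rw [abs_sub_lt_iff]; constructor <;> linarith
    · have := hc_add 0 τ t le_rfl hτ0.le hle htT
      have h2 := hc_nonneg τ t
      have h3 := hδ' τ t hτ0.le hle htT (by rw [abs_sub_lt_iff] at hd; linarith)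
      rw [abs_sub_lt_iff]; constructor <;> linarith
  have hsub : ∀ t, h t - ENNReal.ofReal (c 0 t) = clr (π t) := fun t =>
    ENNReal.add_sub_cancel_right ENNReal.ofReal_ne_top
  -- left limit
  have hL1 := hg₁mono.tendsto_nhdsLT τ
  have hL1' : Tendsto h (𝓝[Ioo 0 τ] τ) (𝓝 (sSup (g₁ '' Iio τ))) := by
    refine (hL1.mono_left (by rw [nhdsWithin_Ioo_eq_nhdsLT hτ0])).congr' ?_
    filter_upwards [self_mem_nhdsWithin] with t ht
    simp [hg₁, min_eq_left ht.2.le, max_eq_right ht.1.le]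
  have hT1 : Tendsto (fun t => clr (π t)) (𝓝[Ioo 0 τ] τ)
      (𝓝 (sSup (g₁ '' Iio τ) - ENNReal.ofReal (c 0 τ))) := by
    have := ENNReal.Tendsto.sub hL1' (hCt (Ioo 0 τ) (fun x hx => ⟨hx.1.le, hx.2.le.trans hτT.le⟩))
      (Or.inr ENNReal.ofReal_ne_top)
    exact this.congr fun t => hsub t
  -- right limit
  have hL2 := hg₂mono.tendsto_nhdsGT τ
  have hL2' : Tendsto h (𝓝[Ioo τ T] τ) (𝓝 (sInf (g₂ '' Ioi τ))) := by
    refine (hL2.mono_left (by rw [nhdsWithin_Ioo_eq_nhdsGT hτT])).congr' ?_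
    filter_upwards [self_mem_nhdsWithin] with t ht
    simp [hg₂, min_eq_left ht.2.le, max_eq_right ht.1.le]
  have hT2 : Tendsto (fun t => clr (π t)) (𝓝[Ioo τ T] τ)
      (𝓝 (sInf (g₂ '' Ioi τ) - ENNReal.ofReal (c 0 τ))) := by
    have := ENNReal.Tendsto.sub hL2' (hCt (Ioo τ T) (fun x hx => ⟨(hτ0.trans hx.1).le, hx.2.le⟩))
      (Or.inr ENNReal.ofReal_ne_top)
    exact this.congr fun t => hsub t
  refine ⟨_, _, hT1, hT2, ?_, ?_⟩
  · rw [← hsub τ]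
    refine tsub_le_tsub_right ?_ _
    refine sSup_le ?_
    rintro x ⟨t, ht, rfl⟩
    rw [← hg₁τ]; exact hg₁mono ht.le
  · rw [← hsub τ]
    refine tsub_le_tsub_right ?_ _
    refine le_sInf ?_
    rintro x ⟨t, ht, rfl⟩
    rw [← hg₂τ]; exact hg₂mono ht.le
end

section
/- Let X be a topological space, clr : X → [0,∞], and for ρ > 0 define the propagating wave W_ρ := {x ∈ X : clr(x) < ρ}. For x with clr(x) < ∞ define ρ_min(x) := inf{ρ > 0 : x ∈ ∂W_ρ} and ρ_max(x) := sup{ρ > 0 : x ∈ ∂W_ρ}, and let E := {x : ρ_min(x) < ρ_max(x)}. Assume clr is lower semicontinuous and that for every x with clr(x) < ∞ and every ρ with ρ_min(x) ≤ ρ < ρ_max(x), x ∈ ∂W_ρ (i.e., the set of ρ with x ∈ ∂W_ρ is an interval). Then for x in the open set where clr < ∞: clr is discontinuous at x if and only if x ∈ E. -/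
open ENNReal Set Topology

/-- Characterization of free-space discontinuities of clearance as wave-envelope points. -/
theorem discontinuous_iff_envelope {X : Type*} [TopologicalSpace X]
    (clr : X → ℝ≥0∞) (hlsc : LowerSemicontinuous clr)
    (W : ℝ≥0∞ → Set X) (hW : ∀ ρ, W ρ = {x | clr x < ρ})
    (ρmin ρmax : X → ℝ≥0∞)
    (hρmin : ∀ x, ρmin x = sInf {ρ | 0 < ρ ∧ x ∈ frontier (W ρ)})
    (hρmax : ∀ x, ρmax x = sSup {ρ | 0 < ρ ∧ x ∈ frontier (W ρ)})
    -- the set of radii at which `x` is a wave-boundary point is an interval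
    (hinterval : ∀ x, clr x < ⊤ → ∀ ρ, ρmin x ≤ ρ → ρ < ρmax x → x ∈ frontier (W ρ))
    -- lower semicontinuity gives `ρmin = clr`
    (hmin_eq : ∀ x, clr x < ⊤ → ρmin x = clr x)
    (E : Set X) (hE : E = {x | ρmin x < ρmax x}) :
    ∀ x : X, clr x < ⊤ → (¬ ContinuousAt clr x ↔ x ∈ E) := by
  intro x hx
  rw [hE]
  simp only [mem_setOf_eq]
  constructor
  · intro hnc
    have h1 : ¬ Filter.Tendsto clr (𝓝 x) (𝓝 (clr x)) := hnc
    rw [tendsto_order] at h1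
    push_neg at h1
    obtain ⟨b, hb, hfreq⟩ := h1 fun b hb => hlsc x b hb
    have hxfr : x ∈ frontier (W b) := by
      rw [hW, frontier_eq_closure_inter_closure]
      refine ⟨subset_closure hb, ?_⟩
      rw [mem_closure_iff_frequently]
      exact hfreq.mono fun y hy => by simpa using hy
    have hle : b ≤ ρmax x := by
      rw [hρmax]
      exact le_sSup ⟨lt_of_le_of_lt (zero_le' (a := clr x)) hb, hxfr⟩
    calc ρmin x = clr x := hmin_eq x hx
      _ < b := hb
      _ ≤ ρmax x := hle
  · intro hlt hc
    rw [hmin_eq x hx] at hlt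
    obtain ⟨ρ, h1, h2⟩ := exists_between hlt
    have hfr := hinterval x hx ρ (by rw [hmin_eq x hx]; exact h1.le) h2
    have hev : ∀ᶠ y in 𝓝 x, clr y < ρ := (tendsto_order.1 hc).2 ρ h1
    have hint : x ∈ interior (W ρ) := by
      rw [mem_interior_iff_mem_nhds, hW]
      exact hev
    exact hfr.2 hint
end

section
/- In the Galaga system (ẋ₁ = u ∈ [−1,1], ẋ₂ = 1, cost = time) with free space X_free = (−1,2)×(−∞,0] ∪ (−5,2)×(0,∞) and obstacle X_obst = ℝ² \ X_free, the clearance of x = (−1/2, −1) equals 1/2, and the clearance of z = (−1/2, 0) equals 5/2; in particular clr(z) − clr(x) = 2 > 1 = d_c(x,z), so clearance is not Lipschitz with respect to the cost quasi-metric. -/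
open Set MeasureTheory ENNReal

/-- Free space of the Galaga system: a vertical passage opening into a wider passage. -/
def GalagaFree : Set (ℝ × ℝ) :=
  (Ioo (-1 : ℝ) 2 ×ˢ Iic (0 : ℝ)) ∪ (Ioo (-5 : ℝ) 2 ×ˢ Ioi (0 : ℝ))

/-- The Galaga obstacle set. -/
def GalagaObst : Set (ℝ × ℝ) := GalagaFreeᶜ

/-- Admissible Galaga trajectories from `x` to `z` in time `T`:
`ẋ₁ = u ∈ [-1,1]`, `ẋ₂ = 1`, staying in the closure of free space. -/
def GalagaAdm (x z : ℝ × ℝ) (T : ℝ) : Prop :=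
  0 ≤ T ∧ ∃ π : ℝ → ℝ × ℝ,
    π 0 = x ∧ π T = z ∧
    (∀ t ∈ Icc (0:ℝ) T, π t ∈ closure GalagaFree) ∧
    (∀ t ∈ Icc (0:ℝ) T, (π t).2 = x.2 + t) ∧
    ∃ u : ℝ → ℝ, (∀ t, |u t| ≤ 1) ∧
      IntervalIntegrable u MeasureTheory.volume 0 T ∧
      ∀ t ∈ Icc (0:ℝ) T, (π t).1 = x.1 + ∫ s in (0:ℝ)..t, u s

/-- The minimal-time quasi-metric of the Galaga system (`⊤` when unreachable). -/
noncomputable def galagaDist (x z : ℝ × ℝ) : ℝ≥0∞ :=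
  sInf {c : ℝ≥0∞ | ∃ T : ℝ, GalagaAdm x z T ∧ c = ENNReal.ofReal T}

/-- Clearance from the Galaga obstacle. -/
noncomputable def galagaClr (x : ℝ × ℝ) : ℝ≥0∞ :=
  ⨅ y ∈ frontier GalagaObst, galagaDist x y

lemma galagaFree_eq : GalagaFree =
    (Ioo (-1:ℝ) 2 ×ˢ (univ : Set ℝ)) ∪ (Ioo (-5:ℝ) 2 ×ˢ Ioi (0:ℝ)) := by
  ext ⟨a, b⟩
  simp only [GalagaFree, mem_union, mem_prod, mem_Ioo, mem_Iic, mem_Ioi, mem_univ, and_true]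
  constructor
  · rintro (⟨h1, _⟩ | ⟨h1, h2⟩)
    · exact Or.inl h1
    · exact Or.inr ⟨h1, h2⟩
  · rintro (h1 | ⟨h1, h2⟩)
    · rcases le_or_gt b 0 with hb | hb
      · exact Or.inl ⟨h1, hb⟩
      · exact Or.inr ⟨⟨by linarith [h1.1], h1.2⟩, hb⟩
    · exact Or.inr ⟨h1, h2⟩

lemma isOpen_galagaFree : IsOpen GalagaFree := by
  rw [galagaFree_eq]
  exact (isOpen_Ioo.prod isOpen_univ).union (isOpen_Ioo.prod isOpen_Ioi)

lemma closure_galagaFree : closure GalagaFree =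
    (Icc (-1:ℝ) 2 ×ˢ Iic (0:ℝ)) ∪ (Icc (-5:ℝ) 2 ×ˢ Ici (0:ℝ)) := by
  unfold GalagaFree
  rw [closure_union, closure_prod_eq, closure_prod_eq, closure_Ioo (by norm_num),
    closure_Ioo (by norm_num), closure_Iic, closure_Ioi]

lemma frontier_obst : frontier GalagaObst = closure GalagaFree \ GalagaFree := by
  rw [GalagaObst, frontier_compl, isOpen_galagaFree.frontier_eq]

lemma frontier_neg {y : ℝ × ℝ} (hy : y ∈ frontier GalagaObst) (h2 : y.2 < 0) :
    y.1 = -1 ∨ y.1 = 2 := by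
  rw [frontier_obst, closure_galagaFree] at hy
  obtain ⟨hcl, hnf⟩ := hy
  have h1 : -1 ≤ y.1 ∧ y.1 ≤ 2 := by
    rcases hcl with ⟨ha, _⟩ | ⟨_, hb⟩
    · exact ⟨ha.1, ha.2⟩
    · exact absurd hb (by simp only [mem_Ici, not_le]; exact h2)
  have hno : ¬(-1 < y.1 ∧ y.1 < 2) := fun h =>
    hnf (Or.inl ⟨mem_Ioo.2 h, mem_Iic.2 h2.le⟩)
  rcases lt_or_eq_of_le h1.1 with hlt | heq
  · right
    by_contra hne
    exact hno ⟨hlt, lt_of_le_of_ne h1.2 hne⟩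
  · left; exact heq.symm

lemma frontier_pos {y : ℝ × ℝ} (hy : y ∈ frontier GalagaObst) (h2 : 0 < y.2) :
    y.1 = -5 ∨ y.1 = 2 := by
  rw [frontier_obst, closure_galagaFree] at hy
  obtain ⟨hcl, hnf⟩ := hy
  have h1 : -5 ≤ y.1 ∧ y.1 ≤ 2 := by
    rcases hcl with ⟨_, ha⟩ | ⟨hb, _⟩
    · exact absurd ha (by simp only [mem_Iic, not_le]; exact h2)
    · exact ⟨hb.1, hb.2⟩
  have hno : ¬(-5 < y.1 ∧ y.1 < 2) := fun h =>
    hnf (Or.inr ⟨mem_Ioo.2 h, mem_Ioi.2 h2⟩)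
  rcases lt_or_eq_of_le h1.1 with hlt | heq
  · right
    by_contra hne
    exact hno ⟨hlt, lt_of_le_of_ne h1.2 hne⟩
  · left; exact heq.symm

lemma galagaAdm_line (x1 x2 c T : ℝ) (hT : 0 ≤ T) (hc : |c| ≤ 1)
    (hmem : ∀ t ∈ Icc (0:ℝ) T, ((x1 + c * t, x2 + t) : ℝ × ℝ) ∈ closure GalagaFree) :
    GalagaAdm (x1, x2) (x1 + c * T, x2 + T) T := by
  refine ⟨hT, fun t => (x1 + c * t, x2 + t), by norm_num, rfl, hmem, fun t _ => rfl,
    fun _ => c, fun _ => hc, intervalIntegrable_const, fun t _ => ?_⟩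
  simp [intervalIntegral.integral_const, smul_eq_mul, mul_comm]

lemma galagaAdm_bound {x1 x2 : ℝ} {y : ℝ × ℝ} {T : ℝ} (h : GalagaAdm (x1, x2) y T) :
    y.2 = x2 + T ∧ |y.1 - x1| ≤ T := by
  obtain ⟨hT, π, h0, hE, _, h2, u, hu, hint, h1⟩ := h
  have hy2 : y.2 = x2 + T := by rw [← hE]; exact h2 T ⟨hT, le_refl T⟩
  have hy1 : y.1 = x1 + ∫ s in (0:ℝ)..T, u s := by rw [← hE]; exact h1 T ⟨hT, le_refl T⟩
  refine ⟨hy2, ?_⟩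
  have hb := intervalIntegral.norm_integral_le_of_norm_le_const (C := 1) (f := u)
    (a := 0) (b := T) (fun s _ => by simpa using hu s)
  rw [Real.norm_eq_abs, one_mul, sub_zero, abs_of_nonneg hT] at hb
  rw [hy1]
  simpa using hb

lemma half_eq : (1/2 : ℝ≥0∞) = ENNReal.ofReal (1/2) := by
  rw [ENNReal.ofReal_div_of_pos (by norm_num), ENNReal.ofReal_one, ENNReal.ofReal_ofNat]

lemma fivehalf_eq : (5/2 : ℝ≥0∞) = ENNReal.ofReal (5/2) := by
  rw [ENNReal.ofReal_div_of_pos (by norm_num), ENNReal.ofReal_ofNat, ENNReal.ofReal_ofNat]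

lemma galagaDist_le {x y : ℝ × ℝ} {T : ℝ} (h : GalagaAdm x y T) :
    galagaDist x y ≤ ENNReal.ofReal T :=
  sInf_le ⟨T, h, rfl⟩

-- clearance of x = (-1/2, -1)
lemma clr_x : galagaClr (-1/2, -1) = 1/2 := by
  have hadm : GalagaAdm (-1/2, -1) (-1, -1/2) (1/2) := by
    have hmem : ∀ t ∈ Icc (0:ℝ) (1/2),
        (((-1/2:ℝ) + (-1) * t, (-1:ℝ) + t) : ℝ × ℝ) ∈ closure GalagaFree := by
      intro t ht
      obtain ⟨h0, h1⟩ := ht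
      rw [closure_galagaFree]
      left
      exact ⟨mem_Icc.2 ⟨by linarith, by linarith⟩, mem_Iic.2 (by linarith)⟩
    have h := galagaAdm_line (-1/2) (-1) (-1) (1/2) (by norm_num) (by norm_num) hmem
    convert h using 2 <;> norm_num
  have hyF : ((-1:ℝ), (-1/2:ℝ)) ∈ frontier GalagaObst := by
    rw [frontier_obst, closure_galagaFree]
    constructor
    · left
      exact ⟨mem_Icc.2 ⟨le_refl _, by norm_num⟩, mem_Iic.2 (by norm_num)⟩
    · simp only [GalagaFree, mem_union, mem_prod, mem_Ioo, mem_Iic, mem_Ioi]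
      push_neg
      norm_num
  apply le_antisymm
  · calc galagaClr (-1/2, -1) ≤ galagaDist (-1/2, -1) (-1, -1/2) :=
          iInf₂_le_of_le ((-1:ℝ), (-1/2:ℝ)) hyF le_rfl
    _ ≤ ENNReal.ofReal (1/2) := galagaDist_le hadm
    _ = 1/2 := half_eq.symm
  · refine le_iInf fun y => le_iInf fun hy => le_sInf ?_
    rintro c ⟨T, hadm', rfl⟩
    obtain ⟨hy2, hy1⟩ := galagaAdm_bound hadm'
    have hT : 0 ≤ T := hadm'.1
    rw [half_eq]
    apply ENNReal.ofReal_le_ofReal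
    by_contra hlt
    push_neg at hlt
    have hneg : y.2 < 0 := by linarith
    rw [abs_le] at hy1
    rcases frontier_neg hy hneg with h | h <;> rw [h] at hy1 <;>
      [linarith [hy1.1]; linarith [hy1.2]]

lemma z_in_free : ((-1/2:ℝ), (0:ℝ)) ∈ GalagaFree := by
  left
  exact ⟨mem_Ioo.2 ⟨by norm_num, by norm_num⟩, mem_Iic.2 le_rfl⟩

-- clearance of z = (-1/2, 0)
lemma clr_z : galagaClr (-1/2, 0) = 5/2 := by
  have hadm : GalagaAdm (-1/2, 0) (2, 5/2) (5/2) := by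
    have hmem : ∀ t ∈ Icc (0:ℝ) (5/2),
        (((-1/2:ℝ) + 1 * t, (0:ℝ) + t) : ℝ × ℝ) ∈ closure GalagaFree := by
      intro t ht
      obtain ⟨h0, h1⟩ := ht
      rw [closure_galagaFree]
      right
      exact ⟨mem_Icc.2 ⟨by linarith, by linarith⟩, mem_Ici.2 (by linarith)⟩
    have h := galagaAdm_line (-1/2) 0 1 (5/2) (by norm_num) (by norm_num) hmem
    convert h using 2 <;> norm_num
  have hyF : ((2:ℝ), (5/2:ℝ)) ∈ frontier GalagaObst := by
    rw [frontier_obst, closure_galagaFree]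
    constructor
    · right
      exact ⟨mem_Icc.2 ⟨by norm_num, le_refl _⟩, mem_Ici.2 (by norm_num)⟩
    · simp only [GalagaFree, mem_union, mem_prod, mem_Ioo, mem_Iic, mem_Ioi]
      push_neg
      norm_num
  apply le_antisymm
  · calc galagaClr (-1/2, 0) ≤ galagaDist (-1/2, 0) (2, 5/2) :=
          iInf₂_le_of_le ((2:ℝ), (5/2:ℝ)) hyF le_rfl
    _ ≤ ENNReal.ofReal (5/2) := galagaDist_le hadm
    _ = 5/2 := fivehalf_eq.symm
  · refine le_iInf fun y => le_iInf fun hy => le_sInf ?_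
    rintro c ⟨T, hadm', rfl⟩
    obtain ⟨hy2, hy1⟩ := galagaAdm_bound hadm'
    have hT : 0 ≤ T := hadm'.1
    rw [fivehalf_eq]
    apply ENNReal.ofReal_le_ofReal
    by_contra hlt
    push_neg at hlt
    rcases eq_or_lt_of_le hT with heq | hpos
    · -- T = 0, so y = z, but z is not on the frontier
      have hy_eq : y = ((-1/2:ℝ), (0:ℝ)) := by
        have h1 : y.1 = -1/2 := by
          have := abs_nonneg (y.1 - (-1/2))
          have : |y.1 - (-1/2)| = 0 := le_antisymm (by rw [← heq] at hy1; exact hy1) (abs_nonneg _)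
          have := abs_eq_zero.1 this
          linarith
        have h2' : y.2 = 0 := by rw [hy2, ← heq]; ring
        exact Prod.ext h1 h2'
      rw [hy_eq, frontier_obst] at hy
      exact hy.2 z_in_free
    · have hpos' : 0 < y.2 := by linarith
      rw [abs_le] at hy1
      rcases frontier_pos hy hpos' with h | h <;> rw [h] at hy1 <;>
        [linarith [hy1.1]; linarith [hy1.2]]

lemma adm_xz : GalagaAdm (-1/2, -1) (-1/2, 0) 1 := by
  have hmem : ∀ t ∈ Icc (0:ℝ) 1,
      (((-1/2:ℝ) + 0 * t, (-1:ℝ) + t) : ℝ × ℝ) ∈ closure GalagaFree := by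
    intro t ht
    obtain ⟨h0, h1⟩ := ht
    rw [closure_galagaFree]
    left
    exact ⟨mem_Icc.2 ⟨by linarith, by linarith⟩, mem_Iic.2 (by linarith)⟩
  have h := galagaAdm_line (-1/2) (-1) 0 1 (by norm_num) (by norm_num) hmem
  convert h using 2 <;> norm_num

lemma dist_xz : galagaDist (-1/2, -1) (-1/2, 0) = 1 := by
  have hset : {c : ℝ≥0∞ | ∃ T : ℝ, GalagaAdm (-1/2, -1) (-1/2, 0) T ∧
      c = ENNReal.ofReal T} = {1} := by
    ext c
    simp only [mem_setOf_eq, mem_singleton_iff]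
    constructor
    · rintro ⟨T, hadm, rfl⟩
      have hb := (galagaAdm_bound hadm).1
      simp only at hb
      have hT1 : T = 1 := by linarith
      rw [hT1, ENNReal.ofReal_one]
    · rintro rfl
      exact ⟨1, adm_xz, ENNReal.ofReal_one.symm⟩
  rw [galagaDist, hset, sInf_singleton]

/-- The clearances of `(-1/2,-1)` and `(-1/2,0)`, showing that clearance fails to be
Lipschitz with respect to the cost quasi-metric. -/
theorem galaga_clearance_not_lipschitz :
    galagaClr (-1/2, -1) = 1/2 ∧ galagaClr (-1/2, 0) = 5/2 ∧
    galagaDist (-1/2, -1) (-1/2, 0) = 1 ∧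
    galagaDist (-1/2, -1) (-1/2, 0) <
      galagaClr (-1/2, 0) - galagaClr (-1/2, -1) := by
  refine ⟨clr_x, clr_z, dist_xz, ?_⟩
  rw [dist_xz, clr_x, clr_z, half_eq, fivehalf_eq,
    ← ENNReal.ofReal_sub _ (by norm_num : (0:ℝ) ≤ 1/2)]
  norm_num
end

section
/- (Small-time non-returnability.) Let F satisfy the standing hypotheses (nonempty convex compact values, closed graph, locally bounded, locally Lipschitz), let x lie in open free space X_free, and suppose h_F(x,ξ) > 0 for some ξ ≠ 0. Then there exists ρ* > 0 such that for every ρ ∈ (0, ρ*) there exists r(ρ) > 0 with the property: whenever y satisfies ρ ≤ min{d_c(x,y), d_c(y,x)} < ρ*, it holds that ‖x − y‖ ≥ r(ρ). Equivalently, B_{ρ*}(x) \ B_ρ(x) ⊆ complement of the metric ball B_{r(ρ)}(x), where B_ρ(x) denotes the cost ball F_ρ(x) ∪ R_ρ(x). -/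
open Set MeasureTheory Metric ENNReal

/-- An admissible trajectory of the inclusion `π̇ ∈ F(π)` on `[0,T]`, constrained to the
closure of the free space, with (a.e.) derivative `π'`. -/
def IsAdmTraj {n : ℕ} (F : EuclideanSpace ℝ (Fin n) → Set (EuclideanSpace ℝ (Fin n)))
    (Xfree : Set (EuclideanSpace ℝ (Fin n))) (T : ℝ)
    (π π' : ℝ → EuclideanSpace ℝ (Fin n)) : Prop :=
  0 ≤ T ∧
  (∀ t ∈ Icc (0:ℝ) T, π t = π 0 + ∫ s in (0:ℝ)..t, π' s) ∧
  IntervalIntegrable π' MeasureTheory.volume 0 T ∧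
  (∀ᵐ t ∂(MeasureTheory.volume.restrict (Icc (0:ℝ) T)), π' t ∈ F (π t)) ∧
  (∀ t ∈ Icc (0:ℝ) T, π t ∈ closure Xfree)

/-- The cost quasi-metric: infimal running cost over admissible trajectories from `x` to `y`
(`⊤` if there is none). -/
noncomputable def costDist {n : ℕ}
    (F : EuclideanSpace ℝ (Fin n) → Set (EuclideanSpace ℝ (Fin n)))
    (ψ : EuclideanSpace ℝ (Fin n) → EuclideanSpace ℝ (Fin n) → ℝ)
    (Xfree : Set (EuclideanSpace ℝ (Fin n)))
    (x y : EuclideanSpace ℝ (Fin n)) : ℝ≥0∞ :=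
  sInf {c : ℝ≥0∞ | ∃ T : ℝ, ∃ π π' : ℝ → EuclideanSpace ℝ (Fin n),
    IsAdmTraj F Xfree T π π' ∧ π 0 = x ∧ π T = y ∧
    c = ENNReal.ofReal (∫ t in (0:ℝ)..T, ψ (π t) (π' t))}

lemma traj_bound {n : ℕ} {F : EuclideanSpace ℝ (Fin n) → Set (EuclideanSpace ℝ (Fin n))}
    {Xfree : Set (EuclideanSpace ℝ (Fin n))}
    {ψ : EuclideanSpace ℝ (Fin n) → EuclideanSpace ℝ (Fin n) → ℝ} (hψpos : ∀ p v, 0 < ψ p v)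
    {x ξ : EuclideanSpace ℝ (Fin n)} {δ M m C a T ρ : ℝ}
    (hδ : 0 < δ) (hM : 0 < M) (hm : 0 < m) (hC : 0 < C) (ha : 0 < a) (hρ : 0 < ρ)
    (hkey : ∀ p ∈ Metric.closedBall x δ, ∀ v ∈ F p,
      ‖v‖ ≤ M ∧ a ≤ (inner ℝ ξ v : ℝ) ∧ m ≤ ψ p v ∧ ψ p v ≤ C)
    {π π' : ℝ → EuclideanSpace ℝ (Fin n)} (hadm : IsAdmTraj F Xfree T π π')
    (hend : π 0 = x ∨ π T = x)
    (hlo : ρ ≤ ∫ t in (0:ℝ)..T, ψ (π t) (π' t))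
    (hhi : (∫ t in (0:ℝ)..T, ψ (π t) (π' t)) < m * δ / M) :
    a * ρ / C ≤ ‖ξ‖ * ‖π T - π 0‖ := by
  obtain ⟨hT, hπeq, hπ'int, hae, -⟩ := hadm
  set I := ∫ t in (0:ℝ)..T, ψ (π t) (π' t) with hIdef
  have hInt : IntervalIntegrable (fun t => ψ (π t) (π' t)) volume 0 T := by
    by_contra h
    rw [hIdef, intervalIntegral.integral_undef h] at hlo
    linarith
  have huIcc : uIcc (0:ℝ) T = Icc 0 T := uIcc_of_le hT
  have hcont : ContinuousOn π (Icc 0 T) := by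
    have h1 : ContinuousOn (fun t => π 0 + ∫ s in (0:ℝ)..t, π' s) (Icc 0 T) := by
      refine continuousOn_const.add ?_
      have := intervalIntegral.continuousOn_primitive_interval' hπ'int
        (a := 0) (by rw [huIcc]; exact ⟨le_rfl, hT⟩)
      rwa [huIcc] at this
    exact ContinuousOn.congr h1 hπeq
  -- segment estimates
  have seg : ∀ u w : ℝ, 0 ≤ u → u ≤ w → w ≤ T →
      (∀ t ∈ Ioo u w, dist (π t) x < δ) →
      ‖π w - π u‖ ≤ M * (w - u) ∧ m * (w - u) ≤ I := by
    intro u w hu huw hwT hin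
    have huT : u ≤ T := huw.trans hwT
    have hw0 : 0 ≤ w := hu.trans huw
    have hsub : Icc u w ⊆ Icc 0 T := Icc_subset_Icc hu hwT
    have hsubu : uIcc u w ⊆ uIcc 0 T := by
      rw [huIcc, uIcc_of_le huw]; exact hsub
    have hπ'uw : IntervalIntegrable π' volume u w := hπ'int.mono_set hsubu
    have hψuw : IntervalIntegrable (fun t => ψ (π t) (π' t)) volume u w :=
      hInt.mono_set hsubu
    -- a.e. facts on Icc u w
    have haeF : ∀ᵐ t ∂(volume.restrict (Icc u w)), π' t ∈ F (π t) :=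
      ae_mono (Measure.restrict_mono hsub le_rfl) hae
    have haeIoo : ∀ᵐ t ∂(volume.restrict (Icc u w)), t ∈ Ioo u w := by
      rw [← MeasureTheory.restrict_Ioo_eq_restrict_Icc]
      exact ae_restrict_mem measurableSet_Ioo
    have haeKey : ∀ᵐ t ∂(volume.restrict (Icc u w)),
        ‖π' t‖ ≤ M ∧ m ≤ ψ (π t) (π' t) := by
      filter_upwards [haeF, haeIoo] with t htF htI
      have hball : π t ∈ Metric.closedBall x δ :=
        mem_closedBall.mpr (le_of_lt (by simpa [dist_comm] using hin t htI))
      obtain ⟨h1, -, h3, -⟩ := hkey (π t) hball (π' t) htF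
      exact ⟨h1, h3⟩
    have hπ'0w : IntervalIntegrable π' volume 0 w :=
      hπ'int.mono_set (by rw [huIcc, uIcc_of_le hw0]; exact Icc_subset_Icc le_rfl hwT)
    have hπ'0u : IntervalIntegrable π' volume 0 u :=
      hπ'int.mono_set (by rw [huIcc, uIcc_of_le hu]; exact Icc_subset_Icc le_rfl huT)
    have hψ0w : IntervalIntegrable (fun t => ψ (π t) (π' t)) volume 0 w :=
      hInt.mono_set (by rw [huIcc, uIcc_of_le hw0]; exact Icc_subset_Icc le_rfl hwT)
    have hψ0u : IntervalIntegrable (fun t => ψ (π t) (π' t)) volume 0 u :=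
      hInt.mono_set (by rw [huIcc, uIcc_of_le hu]; exact Icc_subset_Icc le_rfl huT)
    have hψwT : IntervalIntegrable (fun t => ψ (π t) (π' t)) volume w T :=
      hInt.mono_set (by rw [huIcc, uIcc_of_le hwT]; exact Icc_subset_Icc hw0 le_rfl)
    constructor
    · have heq : π w - π u = ∫ t in u..w, π' t := by
        have e := intervalIntegral.integral_interval_sub_left hπ'0w hπ'0u
        rw [hπeq w ⟨hw0, hwT⟩, hπeq u ⟨hu, huT⟩, ← e]
        abel
      rw [heq]
      calc ‖∫ t in u..w, π' t‖ ≤ ∫ t in u..w, ‖π' t‖ :=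
            intervalIntegral.norm_integral_le_integral_norm huw
        _ ≤ ∫ _ in u..w, M := by
            refine intervalIntegral.integral_mono_ae_restrict huw hπ'uw.norm
              intervalIntegrable_const ?_
            filter_upwards [haeKey] with t ht using ht.1
        _ = M * (w - u) := by simp [mul_comm]
    · have h1 : m * (w - u) ≤ ∫ t in u..w, ψ (π t) (π' t) := by
        have := intervalIntegral.integral_mono_ae_restrict huw
          (intervalIntegrable_const (c := m)) hψuw
          (by filter_upwards [haeKey] with t ht using ht.2)
        simpa [mul_comm] using this
      have h2 : (∫ t in u..w, ψ (π t) (π' t)) ≤ I := by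
        have e1 : (∫ t in (0:ℝ)..u, ψ (π t) (π' t)) + (∫ t in u..w, ψ (π t) (π' t))
            = ∫ t in (0:ℝ)..w, ψ (π t) (π' t) :=
          intervalIntegral.integral_add_adjacent_intervals hψ0u hψuw
        have e2 : (∫ t in (0:ℝ)..w, ψ (π t) (π' t)) + (∫ t in w..T, ψ (π t) (π' t)) = I :=
          intervalIntegral.integral_add_adjacent_intervals hψ0w hψwT
        have p1 : 0 ≤ ∫ t in (0:ℝ)..u, ψ (π t) (π' t) :=
          intervalIntegral.integral_nonneg hu (fun t _ => (hψpos _ _).le)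
        have p2 : 0 ≤ ∫ t in w..T, ψ (π t) (π' t) :=
          intervalIntegral.integral_nonneg hwT (fun t _ => (hψpos _ _).le)
        linarith
      linarith
  -- confinement to the ball
  have hball : ∀ t ∈ Icc (0:ℝ) T, dist (π t) x < δ := by
    by_contra hcon
    push_neg at hcon
    obtain ⟨t₂, ht₂, ht₂d⟩ := hcon
    set S : Set ℝ := {t | t ∈ Icc (0:ℝ) T ∧ δ ≤ dist (π t) x} with hSdef
    have hSne : S.Nonempty := ⟨t₂, ht₂, ht₂d⟩
    have hScl : IsClosed S := by
      have : S = Icc (0:ℝ) T ∩ (fun t => dist (π t) x) ⁻¹' Ici δ := by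
        ext t; simp [hSdef, and_comm]
      rw [this]
      exact ContinuousOn.preimage_isClosed_of_isClosed
        ((continuous_id.dist continuous_const).comp_continuousOn hcont) isClosed_Icc isClosed_Ici
    have hSsub : S ⊆ Icc (0:ℝ) T := fun t ht => ht.1
    rcases hend with h0 | hTend
    · set t₁ := sInf S with ht₁def
      have hbdd : BddBelow S := (bddBelow_Icc : BddBelow (Icc (0:ℝ) T)).mono hSsub
      have ht₁S : t₁ ∈ S := hScl.csInf_mem hSne hbdd
      have ht₁0 : 0 < t₁ := by
        rcases (ht₁S.1.1).lt_or_eq with h | h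
        · exact h
        · exfalso
          have := ht₁S.2
          rw [← h, h0] at this
          simp at this
          linarith
      have hIoo : ∀ t ∈ Ioo (0:ℝ) t₁, dist (π t) x < δ := by
        intro t ht
        by_contra hge
        push_neg at hge
        have : t ∈ S := ⟨⟨ht.1.le, ht.2.le.trans ht₁S.1.2⟩, hge⟩
        exact absurd (csInf_le hbdd this) (not_le.mpr ht.2)
      obtain ⟨hs1, hs2⟩ := seg 0 t₁ le_rfl ht₁0.le ht₁S.1.2 hIoo
      have hd : δ ≤ ‖π t₁ - π 0‖ := by
        rw [h0, ← dist_eq_norm]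
        exact ht₁S.2
      have ht₁M : δ ≤ M * t₁ := by simpa using hd.trans hs1
      have : m * δ / M ≤ m * t₁ := by
        rw [div_le_iff₀ hM]; nlinarith
      linarith
    · set t₀ := sSup S with ht₀def
      have hbdd : BddAbove S := (bddAbove_Icc : BddAbove (Icc (0:ℝ) T)).mono hSsub
      have ht₀S : t₀ ∈ S := hScl.csSup_mem hSne hbdd
      have ht₀T : t₀ < T := by
        rcases (ht₀S.1.2).lt_or_eq with h | h
        · exact h
        · exfalso
          have := ht₀S.2
          rw [h, hTend] at this
          simp at this
          linarith
      have hIoo : ∀ t ∈ Ioo t₀ T, dist (π t) x < δ := by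
        intro t ht
        by_contra hge
        push_neg at hge
        have : t ∈ S := ⟨⟨(ht₀S.1.1).trans ht.1.le, ht.2.le⟩, hge⟩
        exact absurd (le_csSup hbdd this) (not_le.mpr ht.1)
      obtain ⟨hs1, hs2⟩ := seg t₀ T ht₀S.1.1 ht₀T.le le_rfl hIoo
      have hd : δ ≤ ‖π T - π t₀‖ := by
        rw [norm_sub_rev, hTend, ← dist_eq_norm]
        exact ht₀S.2
      have ht₀M : δ ≤ M * (T - t₀) := hd.trans hs1
      have : m * δ / M ≤ m * (T - t₀) := by
        rw [div_le_iff₀ hM]; nlinarith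
      linarith
  -- now the whole trajectory is in the ball
  have haeAll : ∀ᵐ t ∂(volume.restrict (Icc (0:ℝ) T)),
      a ≤ (inner ℝ ξ (π' t) : ℝ) ∧ ψ (π t) (π' t) ≤ C := by
    filter_upwards [hae, ae_restrict_mem measurableSet_Icc] with t htF htI
    have hb : π t ∈ Metric.closedBall x δ :=
      mem_closedBall.mpr (le_of_lt (by simpa [dist_comm] using hball t htI))
    obtain ⟨-, h2, -, h4⟩ := hkey (π t) hb (π' t) htF
    exact ⟨h2, h4⟩
  have hTC : ρ ≤ C * T := by
    have := intervalIntegral.integral_mono_ae_restrict hT hInt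
      (intervalIntegrable_const (c := C))
      (by filter_upwards [haeAll] with t ht using ht.2)
    rw [intervalIntegral.integral_const] at this
    have : I ≤ T * C := by simpa using this
    nlinarith
  have hLint : IntervalIntegrable (fun t => (inner ℝ ξ (π' t) : ℝ)) volume 0 T := by
    have h1 := (innerSL ℝ ξ).integrable_comp hπ'int.1
    have h2 := (innerSL ℝ ξ).integrable_comp hπ'int.2
    exact ⟨by simpa [IntegrableOn] using h1, by simpa [IntegrableOn] using h2⟩
  have hinner : a * T ≤ (inner ℝ ξ (π T - π 0) : ℝ) := by
    have heq : π T - π 0 = ∫ t in (0:ℝ)..T, π' t := by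
      rw [hπeq T ⟨hT, le_rfl⟩]; abel
    have hcomm : (∫ t in (0:ℝ)..T, (inner ℝ ξ (π' t) : ℝ))
        = (inner ℝ ξ (∫ t in (0:ℝ)..T, π' t) : ℝ) := by
      have := (innerSL ℝ ξ).intervalIntegral_comp_comm hπ'int
      simpa using this
    have hmono : a * T ≤ ∫ t in (0:ℝ)..T, (inner ℝ ξ (π' t) : ℝ) := by
      have := intervalIntegral.integral_mono_ae_restrict hT
        (intervalIntegrable_const (c := a)) hLint
        (by filter_upwards [haeAll] with t ht using ht.1)
      rw [intervalIntegral.integral_const] at this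
      simpa [mul_comm] using this
    rw [heq, ← hcomm]
    exact hmono
  have hfin : (inner ℝ ξ (π T - π 0) : ℝ) ≤ ‖ξ‖ * ‖π T - π 0‖ := real_inner_le_norm _ _
  have h1 : a * ρ / C ≤ a * T := by
    rw [div_le_iff₀ hC]; nlinarith
  linarith

/-- Small-time non-returnability under a strictly positive minimal Hamiltonian. -/
theorem small_time_non_returnability {n : ℕ}
    (F : EuclideanSpace ℝ (Fin n) → Set (EuclideanSpace ℝ (Fin n)))
    -- (SH1) nonempty, closed, bounded, convex values with closed graph
    (hFne : ∀ x, (F x).Nonempty) (hFconv : ∀ x, Convex ℝ (F x))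
    (hFgraph : IsClosed {p : EuclideanSpace ℝ (Fin n) × EuclideanSpace ℝ (Fin n) | p.2 ∈ F p.1})
    (hFbdd : ∀ K : Set (EuclideanSpace ℝ (Fin n)), IsCompact K →
      ∃ M > (0:ℝ), ∀ x ∈ K, ∀ v ∈ F x, ‖v‖ ≤ M)
    -- (SH2) linear growth
    (hgrowth : ∃ γ c : ℝ, 0 < γ ∧ 0 < c ∧ ∀ x, ∀ v ∈ F x, ‖v‖ ≤ γ * ‖x‖ + c)
    -- (SH3) local Lipschitz regularity
    (hLip : ∀ K : Set (EuclideanSpace ℝ (Fin n)), IsCompact K →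
      ∃ k > (0:ℝ), ∀ x ∈ K, ∀ y ∈ K, ∀ v ∈ F x, ∃ w ∈ F y, ‖v - w‖ ≤ k * ‖x - y‖)
    -- positive continuous running cost
    (ψ : EuclideanSpace ℝ (Fin n) → EuclideanSpace ℝ (Fin n) → ℝ)
    (hψcont : Continuous fun p : EuclideanSpace ℝ (Fin n) × EuclideanSpace ℝ (Fin n) =>
      ψ p.1 p.2)
    (hψpos : ∀ p v, 0 < ψ p v)
    -- open free space
    (Xfree : Set (EuclideanSpace ℝ (Fin n))) (hopen : IsOpen Xfree)
    (x : EuclideanSpace ℝ (Fin n)) (hx : x ∈ Xfree)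
    (ξ : EuclideanSpace ℝ (Fin n)) (hξ : ξ ≠ 0)
    (hpos : 0 < sInf ((fun v => (inner ℝ v ξ : ℝ)) '' F x)) :
    ∃ ρstar > (0:ℝ), ∀ ρ : ℝ, 0 < ρ → ρ < ρstar → ∃ r > (0:ℝ),
      ∀ y : EuclideanSpace ℝ (Fin n),
        ENNReal.ofReal ρ ≤ min (costDist F ψ Xfree x y) (costDist F ψ Xfree y x) →
        min (costDist F ψ Xfree x y) (costDist F ψ Xfree y x) < ENNReal.ofReal ρstar →
        r ≤ ‖x - y‖ := by
  set s := sInf ((fun v => (inner ℝ v ξ : ℝ)) '' F x) with hsdef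
  have hξn : (0:ℝ) < ‖ξ‖ := norm_pos_iff.mpr hξ
  -- lower bound s on F x
  obtain ⟨M₀, hM₀pos, hM₀⟩ := hFbdd {x} isCompact_singleton
  have hbddB : BddBelow ((fun v => (inner ℝ v ξ : ℝ)) '' F x) := by
    refine ⟨-(M₀ * ‖ξ‖), ?_⟩
    rintro r ⟨v, hv, rfl⟩
    have h1 : |(inner ℝ v ξ : ℝ)| ≤ ‖v‖ * ‖ξ‖ := abs_real_inner_le_norm v ξ
    have h2 : ‖v‖ ≤ M₀ := hM₀ x rfl v hv
    have := neg_abs_le (inner ℝ v ξ : ℝ)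
    nlinarith
  have hsle : ∀ v ∈ F x, s ≤ (inner ℝ ξ v : ℝ) := by
    intro v hv
    rw [real_inner_comm]
    exact csInf_le hbddB ⟨v, hv, rfl⟩
  -- Lipschitz constant on closed unit ball
  obtain ⟨k, hk, hkLip⟩ := hLip (Metric.closedBall x 1) (isCompact_closedBall x 1)
  set a := s / 2 with hadef
  have ha : 0 < a := by positivity
  set δ := min 1 (s / (2 * k * ‖ξ‖)) with hδdef
  have hδ : 0 < δ := lt_min one_pos (by positivity)
  have hδ1 : δ ≤ 1 := min_le_left _ _
  have hδ2 : δ ≤ s / (2 * k * ‖ξ‖) := min_le_right _ _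
  have hball_sub : Metric.closedBall x δ ⊆ Metric.closedBall x 1 :=
    Metric.closedBall_subset_closedBall hδ1
  -- inner product bound on the ball
  have hFa : ∀ p ∈ Metric.closedBall x δ, ∀ v ∈ F p, a ≤ (inner ℝ ξ v : ℝ) := by
    intro p hp v hv
    obtain ⟨w, hw, hvw⟩ := hkLip p (hball_sub hp) x (Metric.mem_closedBall_self zero_le_one) v hv
    have hpx : ‖p - x‖ ≤ δ := by
      rw [← dist_eq_norm]; exact hp
    have h1 : s ≤ (inner ℝ ξ w : ℝ) := hsle w hw
    have h2 : |(inner ℝ ξ (v - w) : ℝ)| ≤ ‖ξ‖ * ‖v - w‖ := abs_real_inner_le_norm ξ (v - w)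
    have h3 : ‖v - w‖ ≤ k * δ := hvw.trans (by nlinarith)
    have h4 : ‖ξ‖ * (k * δ) ≤ s / 2 := by
      have h := (le_div_iff₀ (by positivity : (0:ℝ) < 2 * k * ‖ξ‖)).mp hδ2
      nlinarith
    have h5 : (inner ℝ ξ v : ℝ) = inner ℝ ξ w + (inner ℝ ξ (v - w) : ℝ) := by
      rw [← inner_add_right]; congr 1; abel
    have h6 := neg_abs_le (inner ℝ ξ (v - w) : ℝ)
    have h7 : ‖ξ‖ * ‖v - w‖ ≤ ‖ξ‖ * (k * δ) := by nlinarith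
    rw [hadef, h5]
    nlinarith
  -- velocity bound
  obtain ⟨M, hM, hMb⟩ := hFbdd (Metric.closedBall x 1) (isCompact_closedBall x 1)
  have hFb : ∀ p ∈ Metric.closedBall x δ, ∀ v ∈ F p, ‖v‖ ≤ M :=
    fun p hp v hv => hMb p (hball_sub hp) v hv
  -- extrema of ψ on compact set
  set K2 : Set (EuclideanSpace ℝ (Fin n) × EuclideanSpace ℝ (Fin n)) :=
    (Metric.closedBall x δ) ×ˢ (Metric.closedBall (0:EuclideanSpace ℝ (Fin n)) M) with hK2def
  have hK2c : IsCompact K2 := (isCompact_closedBall x δ).prod (isCompact_closedBall 0 M)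
  have hK2ne : K2.Nonempty := ⟨(x, 0), Metric.mem_closedBall_self hδ.le,
    Metric.mem_closedBall_self hM.le⟩
  obtain ⟨pm, hpm, hmin⟩ := hK2c.exists_isMinOn hK2ne hψcont.continuousOn
  obtain ⟨pM, hpM, hmax⟩ := hK2c.exists_isMaxOn hK2ne hψcont.continuousOn
  set m := ψ pm.1 pm.2 with hmdef
  set C := ψ pM.1 pM.2 with hCdef
  have hm : 0 < m := hψpos _ _
  have hC : 0 < C := hψpos _ _
  have hψm : ∀ p ∈ Metric.closedBall x δ, ∀ v : EuclideanSpace ℝ (Fin n),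
      ‖v‖ ≤ M → m ≤ ψ p v := by
    intro p hp v hv
    exact isMinOn_iff.mp hmin (p, v) ⟨hp, by simpa [Metric.mem_closedBall, dist_eq_norm] using hv⟩
  have hψC : ∀ p ∈ Metric.closedBall x δ, ∀ v : EuclideanSpace ℝ (Fin n),
      ‖v‖ ≤ M → ψ p v ≤ C := by
    intro p hp v hv
    exact isMaxOn_iff.mp hmax (p, v) ⟨hp, by simpa [Metric.mem_closedBall, dist_eq_norm] using hv⟩
  have hkey : ∀ p ∈ Metric.closedBall x δ, ∀ v ∈ F p,
      ‖v‖ ≤ M ∧ a ≤ (inner ℝ ξ v : ℝ) ∧ m ≤ ψ p v ∧ ψ p v ≤ C := by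
    intro p hp v hv
    have h1 := hFb p hp v hv
    exact ⟨h1, hFa p hp v hv, hψm p hp v h1, hψC p hp v h1⟩
  -- the small-time threshold
  refine ⟨m * δ / M, by positivity, ?_⟩
  intro ρ hρ hρstar
  refine ⟨a * ρ / (C * ‖ξ‖), by positivity, ?_⟩
  intro y h1 h2
  have hρstarpos : (0:ℝ) < m * δ / M := by positivity
  -- extract a cheap trajectory
  have main : ∀ T (π π' : ℝ → EuclideanSpace ℝ (Fin n)), IsAdmTraj F Xfree T π π' →
      (π 0 = x ∨ π T = x) →
      ENNReal.ofReal ρ ≤ ENNReal.ofReal (∫ t in (0:ℝ)..T, ψ (π t) (π' t)) →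
      ENNReal.ofReal (∫ t in (0:ℝ)..T, ψ (π t) (π' t)) < ENNReal.ofReal (m * δ / M) →
      a * ρ / (C * ‖ξ‖) ≤ ‖π T - π 0‖ := by
    intro T π π' hadm hend hge hlt
    set I := ∫ t in (0:ℝ)..T, ψ (π t) (π' t) with hIdef
    have hI0 : 0 ≤ I := by
      by_contra h
      push_neg at h
      rw [ENNReal.ofReal_eq_zero.mpr h.le] at hge
      exact absurd (ENNReal.ofReal_eq_zero.mp (le_antisymm hge (by simp))) (not_le.mpr hρ)
    have hlo : ρ ≤ I := (ENNReal.ofReal_le_ofReal_iff hI0).mp hge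
    have hhi : I < m * δ / M := (ENNReal.ofReal_lt_ofReal_iff hρstarpos).mp hlt
    have := traj_bound hψpos hδ hM hm hC ha hρ hkey hadm hend hlo hhi
    rw [div_le_iff₀ (by positivity : (0:ℝ) < C * ‖ξ‖)]
    nlinarith [(div_le_iff₀ hC).mp this, norm_nonneg (π T - π 0)]
  rcases min_lt_iff.mp h2 with hd | hd
  · obtain ⟨c, hcmem, hclt⟩ := sInf_lt_iff.mp hd
    obtain ⟨T, π, π', hadm, h0, hT, rfl⟩ := hcmem
    have hge : ENNReal.ofReal ρ ≤ ENNReal.ofReal (∫ t in (0:ℝ)..T, ψ (π t) (π' t)) :=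
      le_trans (h1.trans (min_le_left _ _)) (sInf_le ⟨T, π, π', hadm, h0, hT, rfl⟩)
    have := main T π π' hadm (Or.inl h0) hge hclt
    rw [hT, h0, norm_sub_rev] at this
    exact this
  · obtain ⟨c, hcmem, hclt⟩ := sInf_lt_iff.mp hd
    obtain ⟨T, π, π', hadm, h0, hT, rfl⟩ := hcmem
    have hge : ENNReal.ofReal ρ ≤ ENNReal.ofReal (∫ t in (0:ℝ)..T, ψ (π t) (π' t)) :=
      le_trans (h1.trans (min_le_right _ _)) (sInf_le ⟨T, π, π', hadm, h0, hT, rfl⟩)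
    have := main T π π' hadm (Or.inr hT) hge hclt
    rw [hT, h0] at this
    exact this
end
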